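/- Let n ≥ 1 and let p ∈ ℂ[x₁,…,xₙ] be a nonconstant polynomial whose zero set V(p) is allowable. Then V(p) is a finite union of allowable hyperplanes; that is, there are finitely many hyperplanes H₁, …, H_s, each equal to some Z_i, S_{ij}, or D_{ij}, with V(p) = H₁ ∪ ⋯ ∪ H_s. -/

import Mathlib

/-- An allowable hyperplane in `ℂⁿ`: one of `{x_i = 0}`, `{x_i + x_j = 0}`, `{x_i - x_j = 0}`. -/
def IsAllowableHyperplane (n : ℕ) (H : Set (Fin n → ℂ)) : Prop :=
  (∃ i : Fin n, H = {x | x i = 0}) ∨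
  (∃ i j : Fin n, i ≠ j ∧ H = {x | x i + x j = 0}) ∨
  (∃ i j : Fin n, i ≠ j ∧ H = {x | x i - x j = 0})

/-- An allowable set: a finite union of finite intersections of allowable hyperplanes. -/
def IsAllowable (n : ℕ) (A : Set (Fin n → ℂ)) : Prop :=
  ∃ (k : ℕ) (m : Fin k → ℕ) (H : (i : Fin k) → Fin (m i) → Set (Fin n → ℂ)),
    (∀ i j, IsAllowableHyperplane n (H i j)) ∧ A = ⋃ i, ⋂ j, H i j

open MvPolynomial

lemma auxPrimeX {m : ℕ} (i : Fin (m+1)) : Prime (MvPolynomial.X i : MvPolynomial (Fin (m+1)) ℂ) := by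
  let e := (renameEquiv ℂ (Equiv.swap i 0)).trans (MvPolynomial.finSuccEquiv ℂ m)
  have h : e (X i) = Polynomial.X := by
    simp [e, renameEquiv_apply, rename_X, Equiv.swap_apply_left, finSuccEquiv_X_zero]
  have := (MulEquiv.prime_iff (e.toRingEquiv.toMulEquiv) (p := (X i : MvPolynomial (Fin (m+1)) ℂ))).mp
  apply this
  have h2 : e.toRingEquiv.toMulEquiv (X i) = Polynomial.X := h
  rw [h2]; exact Polynomial.prime_X

lemma auxPrimeLin {m : ℕ} (i j : Fin (m+1)) (hij : i ≠ j) (c : ℂ) :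
    Prime (MvPolynomial.X i + MvPolynomial.C c * MvPolynomial.X j : MvPolynomial (Fin (m+1)) ℂ) := by
  classical
  let f : Fin (m+1) → MvPolynomial (Fin (m+1)) ℂ := fun t => if t = i then X i + C c * X j else X t
  let g : Fin (m+1) → MvPolynomial (Fin (m+1)) ℂ := fun t => if t = i then X i - C c * X j else X t
  let φ : MvPolynomial (Fin (m+1)) ℂ →ₐ[ℂ] MvPolynomial (Fin (m+1)) ℂ := aeval f
  let ψ : MvPolynomial (Fin (m+1)) ℂ →ₐ[ℂ] MvPolynomial (Fin (m+1)) ℂ := aeval g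
  have hfj : f j = X j := by simp [f, (Ne.symm hij : j ≠ i)]
  have hgj : g j = X j := by simp [g, (Ne.symm hij : j ≠ i)]
  have h1 : φ.comp ψ = AlgHom.id ℂ _ := by
    apply MvPolynomial.algHom_ext
    intro t
    by_cases ht : t = i
    · subst ht
      simp [φ, ψ, f, g, Ne.symm hij]
      try ring
    · simp [φ, ψ, f, g, ht]
  have h2 : ψ.comp φ = AlgHom.id ℂ _ := by
    apply MvPolynomial.algHom_ext
    intro t
    by_cases ht : t = i
    · subst ht
      simp [φ, ψ, f, g, Ne.symm hij]
      try ring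
    · simp [φ, ψ, f, g, ht]
  let e : MvPolynomial (Fin (m+1)) ℂ ≃ₐ[ℂ] MvPolynomial (Fin (m+1)) ℂ := AlgEquiv.ofAlgHom φ ψ h1 h2
  have h : e (X i) = X i + C c * X j := by simp [e, φ, f]
  have := (MulEquiv.prime_iff (e.toRingEquiv.toMulEquiv)
    (p := (X i : MvPolynomial (Fin (m+1)) ℂ))).mpr (auxPrimeX i)
  have h2' : e.toRingEquiv.toMulEquiv (X i) = X i + C c * X j := h
  rwa [h2'] at this

lemma auxHyperplane {m : ℕ} (H : Set (Fin (m+1) → ℂ)) (hH : IsAllowableHyperplane (m+1) H) :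
    ∃ ℓ : MvPolynomial (Fin (m+1)) ℂ, Prime ℓ ∧ H = {x | MvPolynomial.eval x ℓ = 0} := by
  rcases hH with ⟨i, rfl⟩ | ⟨i, j, hij, rfl⟩ | ⟨i, j, hij, rfl⟩
  · exact ⟨X i, auxPrimeX i, by ext x; simp⟩
  · refine ⟨X i + C 1 * X j, auxPrimeLin i j hij 1, ?_⟩
    ext x; simp
  · refine ⟨X i + C (-1) * X j, auxPrimeLin i j hij (-1), ?_⟩
    ext x
    simp [sub_eq_add_neg]

/-- The allowable variety of a nonconstant complex polynomial is a
finite union of allowable hyperplanes. -/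
theorem stmt_2 (n : ℕ) (hn : 1 ≤ n) (p : MvPolynomial (Fin n) ℂ)
    (hp : 0 < p.totalDegree)
    (hV : IsAllowable n {x | MvPolynomial.eval x p = 0}) :
    ∃ (s : ℕ) (H : Fin s → Set (Fin n → ℂ)),
      (∀ r, IsAllowableHyperplane n (H r)) ∧
      {x | MvPolynomial.eval x p = 0} = ⋃ r, H r := by
  classical
  obtain ⟨N, rfl⟩ : ∃ N, n = N + 1 := ⟨n - 1, (Nat.succ_pred_eq_of_pos hn).symm⟩
  set V : Set (Fin (N+1) → ℂ) := {x | MvPolynomial.eval x p = 0} with hVdef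
  obtain ⟨k, m, Hs, hHs, hEq⟩ := hV
  have hp0 : p ≠ 0 := fun h => by simp [h] at hp
  have hx0 : ∃ x, MvPolynomial.eval x p ≠ 0 := by
    by_contra h
    push_neg at h
    exact hp0 (MvPolynomial.funext fun x => by simp [h x])
  obtain ⟨x₀, hx₀⟩ := hx0
  have hm : ∀ i : Fin k, 0 < m i := by
    intro i
    by_contra h
    have hmi : m i = 0 := Nat.eq_zero_of_not_pos h
    have hx₀V : x₀ ∈ V := by
      rw [hEq]
      exact Set.mem_iUnion.mpr ⟨i, Set.mem_iInter.mpr (fun j => absurd j.pos (by omega))⟩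
    exact hx₀ hx₀V
  have hcho : ∀ (i : Fin k) (j : Fin (m i)), ∃ ℓ : MvPolynomial (Fin (N+1)) ℂ,
      Prime ℓ ∧ Hs i j = {x | MvPolynomial.eval x ℓ = 0} :=
    fun i j => auxHyperplane _ (hHs i j)
  choose ℓ hℓprime hℓset using hcho
  let q : MvPolynomial (Fin (N+1)) ℂ := ∏ t : (Σ i : Fin k, Fin (m i)), ℓ t.1 t.2
  have hVq : ∀ x ∈ V, MvPolynomial.eval x q = 0 := by
    intro x hx
    rw [hEq] at hx
    obtain ⟨i, hi⟩ := Set.mem_iUnion.mp hx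
    have hj : x ∈ Hs i ⟨0, hm i⟩ := Set.mem_iInter.mp hi _
    rw [hℓset] at hj
    have h0 : MvPolynomial.eval x (ℓ i ⟨0, hm i⟩) = 0 := hj
    have : MvPolynomial.eval x q = ∏ t : (Σ i : Fin k, Fin (m i)),
        MvPolynomial.eval x (ℓ t.1 t.2) := map_prod _ _ _
    rw [this]
    exact Finset.prod_eq_zero (Finset.mem_univ (⟨i, ⟨0, hm i⟩⟩ : Σ i : Fin k, Fin (m i))) h0
  obtain ⟨Nn, hdvd⟩ : ∃ Nn : ℕ, p ∣ q ^ Nn := by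
    have h1 : q ∈ Ideal.radical (Ideal.span {p}) := by
      rw [← MvPolynomial.vanishingIdeal_zeroLocus_eq_radical (K := ℂ),
        MvPolynomial.mem_vanishingIdeal_iff]
      intro x hx
      apply hVq
      rw [MvPolynomial.zeroLocus_span] at hx
      exact hx p (Set.mem_singleton p)
    obtain ⟨Nn, hNn⟩ := Ideal.mem_radical_iff.mp h1
    exact ⟨Nn, Ideal.mem_span_singleton.mp hNn⟩
  let T' : Finset (Σ i : Fin k, Fin (m i)) := Finset.univ.filter (fun t => ℓ t.1 t.2 ∣ p)
  have hsub : ∀ x ∈ V, ∃ t ∈ T', x ∈ Hs t.1 t.2 := by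
    intro x hx
    obtain ⟨u, hu⟩ := UniqueFactorizationMonoid.factors_prod hp0
    have hevalp : MvPolynomial.eval x p = 0 := hx
    have hunit : IsUnit (MvPolynomial.eval x (u : MvPolynomial (Fin (N+1)) ℂ)) :=
      u.isUnit.map (MvPolynomial.eval x)
    have hprod0 : MvPolynomial.eval x ((UniqueFactorizationMonoid.factors p).prod) = 0 := by
      have h := congrArg (MvPolynomial.eval x) hu
      rw [map_mul, hevalp] at h
      exact (mul_eq_zero.mp h).resolve_right hunit.ne_zero
    rw [map_multiset_prod] at hprod0
    obtain ⟨y, hymem, hy0⟩ := Multiset.mem_map.mp (Multiset.prod_eq_zero_iff.mp hprod0)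
    -- y is the factor f, hy0 : eval x y = 0
    have hfprime := UniqueFactorizationMonoid.prime_of_factor y hymem
    have hfp : y ∣ p := (Multiset.dvd_prod hymem).trans (Dvd.intro _ hu)
    have hfq : y ∣ q := hfprime.dvd_of_dvd_pow (hfp.trans hdvd)
    obtain ⟨t, -, hft⟩ := hfprime.exists_mem_finset_dvd hfq
    obtain ⟨r, hr⟩ := hft
    have hr_unit : IsUnit r := by
      rcases (hℓprime t.1 t.2).irreducible.isUnit_or_isUnit hr with h | h
      · exact absurd h hfprime.not_unit
      · exact h
    have hassoc : Associated y (ℓ t.1 t.2) :=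
      ⟨hr_unit.unit, by rw [IsUnit.unit_spec]; exact hr.symm⟩
    have hlp : ℓ t.1 t.2 ∣ p := hassoc.symm.dvd.trans hfp
    have hevalℓ : MvPolynomial.eval x (ℓ t.1 t.2) = 0 := by
      rw [hr, map_mul, hy0, zero_mul]
    exact ⟨t, Finset.mem_filter.mpr ⟨Finset.mem_univ t, hlp⟩, by rw [hℓset]; exact hevalℓ⟩
  have hsup : ∀ t ∈ T', Hs t.1 t.2 ⊆ V := by
    intro t ht x hx
    obtain ⟨r, hr⟩ := (Finset.mem_filter.mp ht).2
    rw [hℓset] at hx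
    have hx' : MvPolynomial.eval x (ℓ t.1 t.2) = 0 := hx
    show MvPolynomial.eval x p = 0
    rw [hr, map_mul, hx', zero_mul]
  refine ⟨T'.card, fun r => Hs (T'.equivFin.symm r : Σ i : Fin k, Fin (m i)).1
    (T'.equivFin.symm r : Σ i : Fin k, Fin (m i)).2, fun r => hHs _ _, ?_⟩
  ext x
  simp only [Set.mem_iUnion]
  constructor
  · intro hx
    obtain ⟨t, ht, hxt⟩ := hsub x hx
    refine ⟨T'.equivFin ⟨t, ht⟩, ?_⟩
    rw [Equiv.symm_apply_apply]
    exact hxt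
  · rintro ⟨r, hr⟩
    exact hsup _ (T'.equivFin.symm r).2 hr
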